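/- Let φ be a Prompt-LTL formula over P with partition (I,O) and let k ≥ 1. If some strategy σ' : (2^I)^+ → 2^{O∪{p}} realizes the LTL formula rel(φ) ∧ ψ_k over the partition (I, O∪{p}), then there exists a strategy σ : (2^I)^+ → 2^O that realizes φ with respect to 2k. -/

import Mathlib

namespace PromptPaper

/-- Prompt-LTL formulas (in negation normal form) over atomic propositions of type `α`. -/
inductive Formula (α : Type) : Type
  | atom    : α → Formula α
  | natom   : α → Formula α
  | and     : Formula α → Formula α → Formula α
  | or      : Formula α → Formula α → Formula α
  | next    : Formula α → Formula α
  | untl    : Formula α → Formula α → Formula α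
  | release : Formula α → Formula α → Formula α
  | promptF : Formula α → Formula α

variable {α ι ο π : Type}

/-- Satisfaction `(w, n, k) ⊨ φ` (arguments: word `w`, bound `k`, position `n`, formula `φ`). -/
def Sat (w : ℕ → Set α) (k : ℕ) : ℕ → Formula α → Prop
  | n, .atom a => a ∈ w n
  | n, .natom a => a ∉ w n
  | n, .and φ ψ => Sat w k n φ ∧ Sat w k n ψ
  | n, .or φ ψ => Sat w k n φ ∨ Sat w k n ψ
  | n, .next φ => Sat w k (n + 1) φ
  | n, .untl φ ψ => ∃ j : ℕ, Sat w k (n + j) ψ ∧ ∀ m < j, Sat w k (n + m) φ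
  | n, .release φ ψ => ∀ j : ℕ, Sat w k (n + j) ψ ∨ ∃ m < j, Sat w k (n + m) φ
  | n, .promptF φ => ∃ j ≤ k, Sat w k (n + j) φ

/-- A formula is an LTL formula if it contains no prompt eventually operator. -/
def isLTL : Formula α → Prop
  | .atom _ => True
  | .natom _ => True
  | .and φ ψ => isLTL φ ∧ isLTL ψ
  | .or φ ψ => isLTL φ ∧ isLTL ψ
  | .next φ => isLTL φ
  | .untl φ ψ => isLTL φ ∧ isLTL ψ
  | .release φ ψ => isLTL φ ∧ isLTL ψ
  | .promptF _ => False

/-- The set of subformulas of a formula. -/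
def subf : Formula α → Set (Formula α)
  | .atom a => {Formula.atom a}
  | .natom a => {Formula.natom a}
  | .and φ ψ => insert (Formula.and φ ψ) (subf φ ∪ subf ψ)
  | .or φ ψ => insert (Formula.or φ ψ) (subf φ ∪ subf ψ)
  | .next φ => insert (Formula.next φ) (subf φ)
  | .untl φ ψ => insert (Formula.untl φ ψ) (subf φ ∪ subf ψ)
  | .release φ ψ => insert (Formula.release φ ψ) (subf φ ∪ subf ψ)
  | .promptF φ => insert (Formula.promptF φ) (subf φ)

/-- The size `|φ|` of a formula: the number of its subformulas. -/
noncomputable def size (φ : Formula α) : ℕ := (subf φ).ncard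

/-- Relativization `rel(φ)`; the fresh proposition `p ∉ P` is modelled by `none : Option α`. -/
def rel : Formula α → Formula (Option α)
  | .atom a => .atom (some a)
  | .natom a => .natom (some a)
  | .and φ ψ => .and (rel φ) (rel ψ)
  | .or φ ψ => .or (rel φ) (rel ψ)
  | .next φ => .next (rel φ)
  | .untl φ ψ => .untl (rel φ) (rel ψ)
  | .release φ ψ => .release (rel φ) (rel ψ)
  | .promptF φ =>
      .and
        (.or (.natom none) (.untl (.atom none) (.untl (.natom none) (rel φ))))
        (.or (.atom none) (.untl (.natom none) (.untl (.atom none) (rel φ))))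

/-- `w'` is a `p`-coloring of `w`: both agree on all propositions in `P`. -/
def IsColoring (w' : ℕ → Set (Option α)) (w : ℕ → Set α) : Prop :=
  ∀ n a, some a ∈ w' n ↔ a ∈ w n

/-- `n` is a change point of `w'`. -/
def ChangePoint (w' : ℕ → Set (Option α)) (n : ℕ) : Prop :=
  n = 0 ∨ ¬ ((none ∈ w' (n - 1)) ↔ (none ∈ w' n))

/-- `m` and `m'` are adjacent change points (the `p`-block between them has length `m' - m`). -/
def AdjacentCP (w' : ℕ → Set (Option α)) (m m' : ℕ) : Prop :=
  m < m' ∧ ChangePoint w' m ∧ ChangePoint w' m' ∧ ∀ l, m < l → l < m' → ¬ ChangePoint w' l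

/-- The truth value of `p` changes infinitely often in `w'`. -/
def InfCP (w' : ℕ → Set (Option α)) : Prop := ∀ n, ∃ m, n < m ∧ ChangePoint w' m

/-- `w'` is `k`-spaced. -/
def Spaced (k : ℕ) (w' : ℕ → Set (Option α)) : Prop :=
  InfCP w' ∧ ∀ m m', AdjacentCP w' m m' → k ≤ m' - m

/-- `w'` is `k`-bounded. -/
def Bounded (k : ℕ) (w' : ℕ → Set (Option α)) : Prop :=
  InfCP w' ∧ ∀ m m', AdjacentCP w' m m' → m' - m ≤ k

/-- The play consistent with strategy `σ` on input sequence `i`; `fi` and `fo` embed input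
and output propositions into the full set of propositions. -/
def play (fi : ι → π) (fo : ο → π) (i : ℕ → Set ι) (σ : List (Set ι) → Set ο) (n : ℕ) :
    Set π :=
  fi '' i n ∪ fo '' σ ((List.range (n + 1)).map i)

/-- `σ` realizes `φ` with respect to `k`: every consistent play satisfies `φ` w.r.t. `k`. -/
def Realizes (fi : ι → π) (fo : ο → π) (σ : List (Set ι) → Set ο) (k : ℕ)
    (φ : Formula π) : Prop :=
  ∀ i : ℕ → Set ι, Sat (play fi fo i σ) k 0 φ

/-- `upd*`, the extension of `upd` to finite input sequences. -/
def updStar {M : Type} (upd : M → Set ι → M) (m0 : M) (l : List (Set ι)) : M :=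
  l.foldl upd m0

/-- The memory structure `(M, m0, upd)` together with next-move function `nxt` implements `σ`. -/
def Implements {M : Type} (m0 : M) (upd : M → Set ι → M) (nxt : M → Set ι → Set ο)
    (σ : List (Set ι) → Set ο) : Prop :=
  ∀ (l : List (Set ι)) (i : Set ι), σ (l ++ [i]) = nxt (updStar upd m0 l) i

/-- `σ` is a finite-state strategy of size at most `n`. -/
def SizeAtMost (σ : List (Set ι) → Set ο) (n : ℕ) : Prop :=
  ∃ (M : Type) (_ : Fintype M) (m0 : M) (upd : M → Set ι → M) (nxt : M → Set ι → Set ο),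
    Fintype.card M ≤ n ∧ Implements m0 upd nxt σ

/-- The set of realizable parameters `R(φ)` over the partition `(ι, ο)`. -/
def RealParams (φ : Formula (ι ⊕ ο)) : Set (ℕ × ℕ) :=
  {nk : ℕ × ℕ | ∃ σ : List (Set ι) → Set ο,
    SizeAtMost σ nk.1 ∧ Realizes Sum.inl Sum.inr σ nk.2 φ}

/-- `(n, k)` is a Pareto position of `φ` (conditions on `n - 1` resp. `k - 1` are vacuously
true if `n = 0` resp. `k = 0`). -/
def Pareto (φ : Formula (ι ⊕ ο)) (n k : ℕ) : Prop :=
  (n, k) ∈ RealParams φ ∧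
    (n = 0 ∨ (n - 1, k) ∉ RealParams φ) ∧
    (k = 0 ∨ (n, k - 1) ∉ RealParams φ)

/-- `true` as a formula (relative to a fixed atomic proposition `a`). -/
def ltrue (a : α) : Formula α := .or (.atom a) (.natom a)

/-- `false` as a formula (relative to a fixed atomic proposition `a`). -/
def lfalse (a : α) : Formula α := .and (.atom a) (.natom a)

/-- `F φ = true U φ`. -/
def ev (a : α) (φ : Formula α) : Formula α := .untl (ltrue a) φ

/-- `G φ = false R φ`. -/
def glob (a : α) (φ : Formula α) : Formula α := .release (lfalse a) φ

/-- Conjunction of a list of formulas. -/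
def conj (a : α) (l : List (Formula α)) : Formula α := l.foldr Formula.and (ltrue a)

/-- The arbiter formula `φ_{r, rp}`, with `I = {q_1, …, q_r}` modelled as `Sum.inl`-side and
`O = {p_1, …, p_r}` as `Sum.inr`-side of `Fin r ⊕ Fin r`. -/
def arbiter (r rp : ℕ) (hr : 0 < r) : Formula (Fin r ⊕ Fin r) :=
  let q : Fin r → Fin r ⊕ Fin r := Sum.inl
  let pr : Fin r → Fin r ⊕ Fin r := Sum.inr
  let a0 : Fin r ⊕ Fin r := Sum.inl ⟨0, hr⟩
  Formula.and
    (conj a0 (((List.finRange r).filter (fun i => decide (i.val < rp))).map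
      (fun i => glob a0 (Formula.or (.natom (q i)) (.promptF (.atom (pr i)))))))
    (Formula.and
      (conj a0 (((List.finRange r).filter (fun i => decide (rp ≤ i.val))).map
        (fun i => glob a0 (Formula.or (.natom (q i)) (ev a0 (.atom (pr i)))))))
      (conj a0 ((List.finRange r).flatMap (fun i =>
        ((List.finRange r).filter (fun j => decide (i ≠ j))).map
          (fun j => glob a0 (Formula.or (.natom (pr i)) (.natom (pr j))))))))


/-- If `p` is constant on positions `n, …, n+j-1` of a `k`-bounded word, then `j ≤ k`. -/
lemma const_le {β : Type} {k : ℕ} {w' : ℕ → Set (Option β)} (hb : Bounded k w')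
    (n j : ℕ) (hc : ∀ m < j, ((none ∈ w' (n + m)) ↔ (none ∈ w' n))) : j ≤ k := by
  classical
  by_contra hlt
  push_neg at hlt
  obtain ⟨hinf, hadj⟩ := hb
  -- no change point strictly inside the constant block
  have noCP : ∀ l, n < l → l < n + j → ¬ ChangePoint w' l := by
    intro l hl1 hl2 hcp
    rcases hcp with h0 | hne
    · omega
    · apply hne
      have e1 : l - 1 = n + (l - 1 - n) := by omega
      have e2 : l = n + (l - n) := by omega
      rw [e1, e2, hc _ (by omega), hc _ (by omega)]
  -- greatest change point ≤ n
  set m := Nat.findGreatest (ChangePoint w') n with hm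
  have hmle : m ≤ n := Nat.findGreatest_le n
  have hmCP : ChangePoint w' m :=
    Nat.findGreatest_spec (Nat.zero_le n) (Or.inl rfl)
  -- least change point > n
  have hex : ∃ m', n < m' ∧ ChangePoint w' m' := hinf n
  set m' := Nat.find hex with hm'
  obtain ⟨hm'gt, hm'CP⟩ := Nat.find_spec hex
  have hm'ge : n + j ≤ m' := by
    by_contra hcon
    exact noCP m' hm'gt (by omega) hm'CP
  have hadjcp : AdjacentCP w' m m' := by
    refine ⟨by omega, hmCP, hm'CP, ?_⟩
    intro l hl1 hl2 hcp
    rcases le_or_gt l n with hle | hgt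
    · exact Nat.findGreatest_is_greatest hl1 hle hcp
    · exact Nat.find_min hex hl2 ⟨hgt, hcp⟩
  have := hadj m m' hadjcp
  omega

/-- Main transfer lemma: on a `k`-bounded coloring, `rel φ` implies `φ` w.r.t. bound `2k`. -/
lemma rel_sat {β : Type} {k : ℕ} (hk : 1 ≤ k) {w' : ℕ → Set (Option β)}
    (hb : Bounded k w') {w : ℕ → Set β} (hcol : ∀ n a, some a ∈ w' n ↔ a ∈ w n) :
    ∀ (φ : Formula β) (n : ℕ), Sat w' 0 n (rel φ) → Sat w (2 * k) n φ := by
  intro φ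
  induction φ with
  | atom a => intro n hs; exact (hcol n a).mp hs
  | natom a => intro n hs; exact fun hmem => hs ((hcol n a).mpr hmem)
  | and φ ψ ihφ ihψ => intro n hs; exact ⟨ihφ n hs.1, ihψ n hs.2⟩
  | or φ ψ ihφ ihψ =>
      intro n hs
      rcases hs with hs | hs
      · exact Or.inl (ihφ n hs)
      · exact Or.inr (ihψ n hs)
  | next φ ihφ => intro n hs; exact ihφ (n + 1) hs
  | untl φ ψ ihφ ihψ =>
      intro n hs
      obtain ⟨j, hj, hpre⟩ := hs
      exact ⟨j, ihψ _ hj, fun m hm => ihφ _ (hpre m hm)⟩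
  | release φ ψ ihφ ihψ =>
      intro n hs j
      rcases hs j with hj | ⟨m, hm, hφ⟩
      · exact Or.inl (ihψ _ hj)
      · exact Or.inr ⟨m, hm, ihφ _ hφ⟩
  | promptF φ ihφ =>
      intro n hs
      obtain ⟨h1, h2⟩ := hs
      by_cases hp : none ∈ w' n
      · rcases h1 with h | h
        · exact absurd hp h
        · obtain ⟨j, h2', hpre⟩ := h
          obtain ⟨j', hrel, hpre'⟩ := h2'
          have hjk : j ≤ k := by
            refine const_le hb n j (fun m hm => ?_)
            exact iff_of_true (hpre m hm) hp
          have hj'k : j' ≤ k := by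
            refine const_le hb (n + j) j' (fun m hm => ?_)
            refine iff_of_false (hpre' m hm) ?_
            have := hpre' 0 (by omega)
            simpa [Sat] using this
          refine ⟨j + j', by omega, ?_⟩
          have := ihφ (n + j + j') hrel
          rwa [Nat.add_assoc] at this
      · rcases h2 with h | h
        · exact absurd h hp
        · obtain ⟨j, h2', hpre⟩ := h
          obtain ⟨j', hrel, hpre'⟩ := h2'
          have hjk : j ≤ k := by
            refine const_le hb n j (fun m hm => ?_)
            exact iff_of_false (hpre m hm) hp
          have hj'k : j' ≤ k := by
            refine const_le hb (n + j) j' (fun m hm => ?_)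
            refine iff_of_true (hpre' m hm) ?_
            have := hpre' 0 (by omega)
            simpa [Sat] using this
          refine ⟨j + j', by omega, ?_⟩
          have := ihφ (n + j + j') hrel
          rwa [Nat.add_assoc] at this

/-- a strategy realizing `rel(φ) ∧ ψ_k` (controlling additionally the fresh
proposition `p`) can be turned into a strategy realizing `φ` w.r.t. `2k`. -/
theorem alternating_color_ltl_to_prompt (ι ο : Type) [Fintype ι] [Fintype ο]
    (φ : Formula (ι ⊕ ο)) (k : ℕ) (hk : 1 ≤ k)
    (ψ : Formula (Option (ι ⊕ ο))) (hψ : isLTL ψ)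
    (hchar : ∀ w' : ℕ → Set (Option (ι ⊕ ο)), Sat w' 0 0 ψ ↔ Bounded k w')
    (σ' : List (Set ι) → Set (Option ο))
    (h : Realizes (fun a => some (Sum.inl a)) (Option.map Sum.inr) σ' 0
      (Formula.and (rel φ) ψ)) :
    ∃ σ : List (Set ι) → Set ο, Realizes Sum.inl Sum.inr σ (2 * k) φ := by
  refine ⟨fun l => {o | some o ∈ σ' l}, ?_⟩
  intro i
  set w' := play (fun a => some (Sum.inl a)) (Option.map Sum.inr) i σ' with hw'
  set w := play Sum.inl Sum.inr i (fun l => {o | some o ∈ σ' l}) with hw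
  have hsat : Sat w' 0 0 (Formula.and (rel φ) ψ) := h i
  obtain ⟨h1, h2⟩ := hsat
  have hb : Bounded k w' := (hchar w').mp h2
  have hcol : ∀ (n : ℕ) (a : ι ⊕ ο), some a ∈ w' n ↔ a ∈ w n := by
    intro n a
    constructor
    · rintro (⟨b, hb', heq⟩ | ⟨o', ho', heq⟩)
      · cases heq
        exact Or.inl ⟨b, hb', rfl⟩
      · cases o' with
        | none => simp at heq
        | some o =>
          simp only [Option.map_some] at heq
          cases heq
          exact Or.inr ⟨o, ho', rfl⟩
    · rintro (⟨b, hb', heq⟩ | ⟨o, ho, heq⟩)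
      · cases heq
        exact Or.inl ⟨b, hb', rfl⟩
      · cases heq
        exact Or.inr ⟨some o, ho, rfl⟩
  exact rel_sat hk hb hcol φ 0 h1

end PromptPaper
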